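/- Let (x_n) be a sequence of positive semidefinite n×n complex matrices, and suppose x_n = a_n b_n with matrices a_n, b_n. Then ‖∑_{n=1}^N x_n‖₂ ≤ ‖∑_{n=1}^N a_n a_n*‖₂^{1/2} · ‖∑_{n=1}^N b_n* b_n‖₂^{1/2} in Frobenius norm; moreover taking a_n = b_n = x_n^{1/2} achieves equality, so the infimum of the right-hand side over all factorizations x_n = a_n b_n equals ‖∑_{n=1}^N x_n‖₂. -/

import Mathlib

open Matrix ComplexOrder

/-- The Frobenius (Hilbert–Schmidt) norm `‖x‖₂ = sqrt(trace(x* x))` of a complex matrix. -/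
noncomputable def frob {m : ℕ} (x : Matrix (Fin m) (Fin m) ℂ) : ℝ :=
  Real.sqrt ((xᴴ * x).trace.re)

lemma trace_inner_eq {ι : Type*} [Fintype ι] (M P : Matrix ι ι ℂ) :
    (Mᴴ * P).trace =
      inner ℂ ((WithLp.equiv 2 (ι × ι → ℂ)).symm (fun q => M q.1 q.2))
        ((WithLp.equiv 2 (ι × ι → ℂ)).symm (fun q => P q.1 q.2)) := by
  simp only [Matrix.trace, Matrix.diag, Matrix.mul_apply, Matrix.conjTranspose_apply,
    PiLp.inner_apply, RCLike.inner_apply, WithLp.equiv_symm_apply, PiLp.toLp_apply, Fintype.sum_prod_type,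
    starRingEnd_apply]
  rw [Finset.sum_comm]
  exact Finset.sum_congr rfl fun _ _ => Finset.sum_congr rfl fun _ _ => mul_comm _ _

lemma trace_cs {ι : Type*} [Fintype ι] (P Q : Matrix ι ι ℂ) :
    ((Pᴴ * Q).trace).re ≤ Real.sqrt ((Pᴴ * P).trace.re) * Real.sqrt ((Qᴴ * Q).trace.re) := by
  have h := re_inner_le_norm (𝕜 := ℂ)
    ((WithLp.equiv 2 (ι × ι → ℂ)).symm (fun q => P q.1 q.2))
    ((WithLp.equiv 2 (ι × ι → ℂ)).symm (fun q => Q q.1 q.2))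
  rw [norm_eq_sqrt_re_inner (𝕜 := ℂ) ((WithLp.equiv 2 (ι × ι → ℂ)).symm (fun q => P q.1 q.2)),
    norm_eq_sqrt_re_inner (𝕜 := ℂ) ((WithLp.equiv 2 (ι × ι → ℂ)).symm (fun q => Q q.1 q.2))] at h
  rw [trace_inner_eq P Q, trace_inner_eq P P, trace_inner_eq Q Q]
  exact h

lemma frob_mul_le {m : ℕ} {ι : Type*} [Fintype ι]
    (A : Matrix (Fin m) ι ℂ) (B : Matrix ι (Fin m) ℂ) :
    frob (A * B) ≤ Real.sqrt (frob (A * Aᴴ)) * Real.sqrt (frob (Bᴴ * B)) := by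
  have hP : (Aᴴ * A)ᴴ = Aᴴ * A := by
    rw [conjTranspose_mul, conjTranspose_conjTranspose]
  have hAAH : (A * Aᴴ)ᴴ = A * Aᴴ := by
    rw [conjTranspose_mul, conjTranspose_conjTranspose]
  have hBBH : (B * Bᴴ)ᴴ = B * Bᴴ := by
    rw [conjTranspose_mul, conjTranspose_conjTranspose]
  have h1 : ((A * B)ᴴ * (A * B)).trace = ((Aᴴ * A)ᴴ * (B * Bᴴ)).trace := by
    rw [hP, conjTranspose_mul, Matrix.trace_mul_comm,
      show (A * B) * (Bᴴ * Aᴴ) = A * ((B * Bᴴ) * Aᴴ) by simp only [Matrix.mul_assoc],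
      Matrix.trace_mul_comm,
      show ((B * Bᴴ) * Aᴴ) * A = (B * Bᴴ) * (Aᴴ * A) by simp only [Matrix.mul_assoc],
      Matrix.trace_mul_comm]
  have h2 : ((Aᴴ * A)ᴴ * (Aᴴ * A)).trace = ((A * Aᴴ)ᴴ * (A * Aᴴ)).trace := by
    rw [hP, hAAH, show (Aᴴ * A) * (Aᴴ * A) = Aᴴ * ((A * Aᴴ) * A) by simp only [Matrix.mul_assoc],
      Matrix.trace_mul_comm, show ((A * Aᴴ) * A) * Aᴴ = (A * Aᴴ) * (A * Aᴴ) by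
        simp only [Matrix.mul_assoc]]
  have h3 : ((B * Bᴴ)ᴴ * (B * Bᴴ)).trace = ((Bᴴ * B)ᴴ * (Bᴴ * B)).trace := by
    rw [hBBH, conjTranspose_mul, conjTranspose_conjTranspose,
      show (B * Bᴴ) * (B * Bᴴ) = B * ((Bᴴ * B) * Bᴴ) by simp only [Matrix.mul_assoc],
      Matrix.trace_mul_comm, show ((Bᴴ * B) * Bᴴ) * B = (Bᴴ * B) * (Bᴴ * B) by
        simp only [Matrix.mul_assoc]]
  have hcs := trace_cs (Aᴴ * A) (B * Bᴴ)
  rw [h2, h3] at hcs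
  have hle : ((A * B)ᴴ * (A * B)).trace.re ≤ frob (A * Aᴴ) * frob (Bᴴ * B) := by
    rw [h1]; exact hcs
  calc frob (A * B) = Real.sqrt (((A * B)ᴴ * (A * B)).trace.re) := rfl
    _ ≤ Real.sqrt (frob (A * Aᴴ) * frob (Bᴴ * B)) := Real.sqrt_le_sqrt hle
    _ = Real.sqrt (frob (A * Aᴴ)) * Real.sqrt (frob (Bᴴ * B)) :=
        Real.sqrt_mul (Real.sqrt_nonneg _) _

open scoped MatrixOrder

theorem positive_sequence_ell1_norm {m N : ℕ}
    (x : Fin N → Matrix (Fin m) (Fin m) ℂ) (hx : ∀ n, (x n).PosSemidef) :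
    (∀ a b : Fin N → Matrix (Fin m) (Fin m) ℂ, (∀ n, x n = a n * b n) →
        frob (∑ n, x n) ≤
          Real.sqrt (frob (∑ n, a n * (a n)ᴴ)) * Real.sqrt (frob (∑ n, (b n)ᴴ * b n))) ∧
      ∃ a b : Fin N → Matrix (Fin m) (Fin m) ℂ, (∀ n, x n = a n * b n) ∧
        Real.sqrt (frob (∑ n, a n * (a n)ᴴ)) * Real.sqrt (frob (∑ n, (b n)ᴴ * b n)) =
          frob (∑ n, x n) := by
  constructor
  · intro a b hab
    set A : Matrix (Fin m) (Fin N × Fin m) ℂ := fun i p => a p.1 i p.2 with hA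
    set B : Matrix (Fin N × Fin m) (Fin m) ℂ := fun p j => b p.1 p.2 j with hB
    have hAB : A * B = ∑ n, x n := by
      ext i j
      rw [Matrix.mul_apply]
      simp only [Matrix.mul_apply, Matrix.sum_apply, Fintype.sum_prod_type, hA, hB]
      refine Finset.sum_congr rfl fun n _ => ?_
      rw [hab n, Matrix.mul_apply]
    have hAA : A * Aᴴ = ∑ n, a n * (a n)ᴴ := by
      ext i j
      simp only [Matrix.mul_apply, Matrix.conjTranspose_apply]
      simp only [Matrix.mul_apply, Matrix.sum_apply, Fintype.sum_prod_type, hA,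
        Matrix.conjTranspose_apply]
    have hBB : Bᴴ * B = ∑ n, (b n)ᴴ * b n := by
      ext i j
      simp only [Matrix.mul_apply, Matrix.conjTranspose_apply]
      simp only [Matrix.mul_apply, Matrix.sum_apply, Fintype.sum_prod_type, hB,
        Matrix.conjTranspose_apply]
    rw [← hAB, ← hAA, ← hBB]
    exact frob_mul_le A B
  · refine ⟨fun n => CFC.sqrt (x n), fun n => CFC.sqrt (x n),
      fun n => (CFC.sqrt_mul_sqrt_self (x n) (hx n).nonneg).symm, ?_⟩
    have h1 : ∀ n : Fin N, CFC.sqrt (x n) * (CFC.sqrt (x n))ᴴ = x n := fun n => by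
      rw [(CFC.sqrt_nonneg (x n)).posSemidef.isHermitian, CFC.sqrt_mul_sqrt_self (x n) (hx n).nonneg]
    have h2 : ∀ n : Fin N, (CFC.sqrt (x n))ᴴ * CFC.sqrt (x n) = x n := fun n => by
      rw [(CFC.sqrt_nonneg (x n)).posSemidef.isHermitian, CFC.sqrt_mul_sqrt_self (x n) (hx n).nonneg]
    simp only [h1, h2]
    exact Real.mul_self_sqrt (Real.sqrt_nonneg _)
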